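/- Let G be a discrete infinite commutative group, (G,X) a G-system, x ∈ X, and F = (F_n)_{n∈D} a Følner net in G. Suppose C_F(x) is S-generic, C_F(x) is not a minimal subset of (G,X), and the almost periodic points of (G,X) are dense in C_F(x). Let k ≥ 2 and let M₁, …, M_k be pairwise distinct minimal subsets of (G,X) contained in C_F(x). Then for every δ > 0, every z ∈ C_F(x), and every open neighborhood U of z, the intersection N(U, B_δ(M₁)) ∩ ⋯ ∩ N(U, B_δ(M_k)) is nonempty. -/

import Mathlib

set_option linter.unusedSectionVars false

open Filter Metric Set

section Defs

variable {G : Type*} [Group G] [DecidableEq G]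
variable {D : Type*} [Preorder D]

/-- `F` is a (left) Følner net in `G`. -/
def IsFolnerNet (F : D → Finset G) : Prop :=
  (∀ n, (F n).Nonempty) ∧
    ∀ g : G,
      Tendsto (fun n : D =>
          ((symmDiff ((F n).image fun h => g * h) (F n)).card : ℝ) / (F n).card)
        atTop (nhds 0)

/-- Upper density of `A ⊆ G` relative to the net `F`. -/
noncomputable def upperDensity (F : D → Finset G) (A : Set G) : ℝ :=
  sSup {α : ℝ | ∀ m : D, ∃ n : D, m ≤ n ∧
    α ≤ (((F n : Set G) ∩ A).ncard : ℝ) / (F n).card}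

variable {X : Type*} [MetricSpace X] [MulAction G X]

/-- The minimal `F`-center of attraction of `x`. -/
def minCenter (F : D → Finset G) (x : X) : Set X :=
  {y : X | ∀ U : Set X, IsOpen U → y ∈ U → 0 < upperDensity F {g : G | g • x ∈ U}}

end Defs

/-- `Λ` is a minimal subset of the `G`-system: nonempty, closed, `G`-invariant, and containing
no nonempty proper closed `G`-invariant subset. -/
def IsMinimalSubset (G : Type*) [Group G] {X : Type*} [MetricSpace X] [MulAction G X]
    (Λ : Set X) : Prop :=
  Λ.Nonempty ∧ IsClosed Λ ∧ (∀ g : G, ∀ z ∈ Λ, g • z ∈ Λ) ∧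
    ∀ Λ' ⊆ Λ, Λ'.Nonempty → IsClosed Λ' → (∀ g : G, ∀ z ∈ Λ', g • z ∈ Λ') → Λ' = Λ

/-- `S ⊆ G` is syndetic: there is a finite `F ⊆ G` with `⋃_{f ∈ F} f⁻¹ S = G`. -/
def IsSyndeticSet {G : Type*} [Group G] (S : Set G) : Prop :=
  ∃ F : Finset G, ∀ g : G, ∃ f ∈ F, f * g ∈ S

/-- `z` is an almost periodic point: `N(z, U)` is syndetic for every open neighborhood `U`. -/
def IsAlmostPeriodicPt (G : Type*) [Group G] {X : Type*} [MetricSpace X] [MulAction G X]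
    (z : X) : Prop :=
  ∀ U : Set X, IsOpen U → z ∈ U → IsSyndeticSet {g : G | g • z ∈ U}

section AuxDensity

open scoped Pointwise

variable {G : Type*} [Group G] [DecidableEq G]
variable {D : Type*} [Preorder D] [IsDirected D (· ≤ ·)] [Nonempty D]

private lemma zero_mem_upperDensitySet (Fol : D → Finset G) (A : Set G) :
    (0 : ℝ) ∈ {α : ℝ | ∀ m : D, ∃ n : D, m ≤ n ∧
      α ≤ (((Fol n : Set G) ∩ A).ncard : ℝ) / (Fol n).card} :=
  fun m => ⟨m, le_refl m, by positivity⟩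

private lemma bddAbove_upperDensitySet (Fol : D → Finset G) (A : Set G) :
    BddAbove {α : ℝ | ∀ m : D, ∃ n : D, m ≤ n ∧
      α ≤ (((Fol n : Set G) ∩ A).ncard : ℝ) / (Fol n).card} := by
  refine ⟨1, fun α hα => ?_⟩
  obtain ⟨n, -, hn⟩ := hα (Classical.arbitrary D)
  refine hn.trans ?_
  apply div_le_one_of_le₀
  · exact_mod_cast (Set.ncard_le_ncard Set.inter_subset_left
      (Fol n).finite_toSet).trans_eq (Set.ncard_coe_finset _)
  · positivity

private lemma exists_pos_mem_of_upperDensity_pos {Fol : D → Finset G} {A : Set G}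
    (h : 0 < upperDensity Fol A) :
    ∃ β > (0 : ℝ), β ∈ {α : ℝ | ∀ m : D, ∃ n : D, m ≤ n ∧
      α ≤ (((Fol n : Set G) ∩ A).ncard : ℝ) / (Fol n).card} := by
  by_contra hc
  push_neg at hc
  have hle : upperDensity Fol A ≤ 0 := by
    apply csSup_le ⟨0, zero_mem_upperDensitySet Fol A⟩
    intro β hβ
    by_contra hβ0
    push_neg at hβ0
    exact hc β hβ0 hβ
  linarith

private lemma nonempty_of_upperDensity_pos {Fol : D → Finset G} {A : Set G}
    (h : 0 < upperDensity Fol A) : A.Nonempty := by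
  rcases Set.eq_empty_or_nonempty A with hA | hA
  · exfalso
    have hle : upperDensity Fol A ≤ 0 := by
      apply csSup_le ⟨0, zero_mem_upperDensitySet Fol A⟩
      intro β hβ
      obtain ⟨n, -, hn⟩ := hβ (Classical.arbitrary D)
      rw [hA] at hn
      simpa using hn
    linarith
  · exact hA

private lemma card_inter_le (Fn : Finset G) (h : G) (A B : Set G)
    (hAB : ∀ a ∈ A, h * a ∈ B) :
    ((Fn : Set G) ∩ A).ncard ≤
      ((Fn : Set G) ∩ B).ncard + (symmDiff (Fn.image fun x => h * x) Fn).card := by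
  classical
  set φ : G → G := fun x => h * x with hφdef
  have hφ : Function.Injective φ := fun a b hab => mul_left_cancel hab
  have h1 : φ '' ((Fn : Set G) ∩ A) ⊆
      ((Fn : Set G) ∩ B) ∪ (((Fn.image φ : Finset G) : Set G) \ (Fn : Set G)) := by
    rintro y ⟨a, ⟨haF, haA⟩, rfl⟩
    by_cases hc : φ a ∈ (Fn : Set G)
    · exact Or.inl ⟨hc, hAB a haA⟩
    · exact Or.inr ⟨Finset.mem_coe.mpr (Finset.mem_image_of_mem φ haF), hc⟩
  have hfin1 : (((Fn : Set G) ∩ B) ∪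
      (((Fn.image φ : Finset G) : Set G) \ (Fn : Set G))).Finite :=
    (Fn.finite_toSet.inter_of_left B).union ((Fn.image φ).finite_toSet.diff)
  have hsub : (((Fn.image φ : Finset G) : Set G) \ (Fn : Set G)) ⊆
      ((symmDiff (Fn.image φ) Fn : Finset G) : Set G) := by
    intro a ha
    rw [Finset.mem_coe, Finset.mem_symmDiff]
    exact Or.inl ⟨Finset.mem_coe.mp ha.1, fun hmem => ha.2 (Finset.mem_coe.mpr hmem)⟩
  calc ((Fn : Set G) ∩ A).ncard
      = (φ '' ((Fn : Set G) ∩ A)).ncard := (Set.ncard_image_of_injective _ hφ).symm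
    _ ≤ (((Fn : Set G) ∩ B) ∪
        (((Fn.image φ : Finset G) : Set G) \ (Fn : Set G))).ncard :=
        Set.ncard_le_ncard h1 hfin1
    _ ≤ ((Fn : Set G) ∩ B).ncard +
        ((((Fn.image φ : Finset G) : Set G) \ (Fn : Set G))).ncard :=
        Set.ncard_union_le _ _
    _ ≤ ((Fn : Set G) ∩ B).ncard + (symmDiff (Fn.image φ) Fn).card := by
        have := (Set.ncard_le_ncard hsub (Finset.finite_toSet _)).trans_eq
          (Set.ncard_coe_finset _)
        omega

private lemma upperDensity_pos_mono (Fol : D → Finset G) (hFol : IsFolnerNet Fol) (h : G)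
    {A B : Set G} (hAB : ∀ a ∈ A, h * a ∈ B)
    (hA : 0 < upperDensity Fol A) : 0 < upperDensity Fol B := by
  obtain ⟨β, hβpos, hβmem⟩ := exists_pos_mem_of_upperDensity_pos hA
  have hev : ∀ᶠ n in (atTop : Filter D),
      ((symmDiff ((Fol n).image fun x => h * x) (Fol n)).card : ℝ) / (Fol n).card < β / 2 :=
    (hFol.2 h).eventually_lt_const (by linarith)
  obtain ⟨m₀, hm₀⟩ := Filter.eventually_atTop.mp hev
  have hmem2 : (β / 2) ∈ {α : ℝ | ∀ m : D, ∃ n : D, m ≤ n ∧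
      α ≤ (((Fol n : Set G) ∩ B).ncard : ℝ) / (Fol n).card} := by
    intro m
    obtain ⟨m₁, hmm₁, hm₀m₁⟩ := directed_of (· ≤ ·) m m₀
    obtain ⟨n, hn, hratio⟩ := hβmem m₁
    refine ⟨n, le_trans hmm₁ hn, ?_⟩
    have hd := hm₀ n (le_trans hm₀m₁ hn)
    have hcardpos : (0 : ℝ) < (Fol n).card := by
      exact_mod_cast Finset.card_pos.mpr (hFol.1 n)
    have hnat := card_inter_le (Fol n) h A B hAB
    have hcast : (((Fol n : Set G) ∩ A).ncard : ℝ) ≤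
        (((Fol n : Set G) ∩ B).ncard : ℝ) +
        ((symmDiff ((Fol n).image fun x => h * x) (Fol n)).card : ℝ) := by
      exact_mod_cast hnat
    have h2 : (((Fol n : Set G) ∩ A).ncard : ℝ) / (Fol n).card ≤
        ((((Fol n : Set G) ∩ B).ncard : ℝ) +
         ((symmDiff ((Fol n).image fun x => h * x) (Fol n)).card : ℝ)) / (Fol n).card := by
      gcongr
    rw [add_div] at h2
    linarith
  have hle := le_csSup (bddAbove_upperDensitySet Fol B) hmem2
  have : (0 : ℝ) < β / 2 := by linarith
  exact lt_of_lt_of_le this hle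

private lemma smul_mem_minCenter {X : Type*} [MetricSpace X] [MulAction G X]
    (hcont : ∀ g : G, Continuous fun y : X => g • y)
    (Fol : D → Finset G) (hFol : IsFolnerNet Fol) {x y : X}
    (hy : y ∈ minCenter Fol x) (h : G) : h • y ∈ minCenter Fol x := by
  intro W hW hmem
  have hA : 0 < upperDensity Fol {g : G | g • x ∈ (fun u : X => h • u) ⁻¹' W} :=
    hy _ (hW.preimage (hcont h)) (by simpa using hmem)
  refine upperDensity_pos_mono Fol hFol h ?_ hA
  intro a ha
  simpa [mul_smul] using ha

end AuxDensity

section AuxSyndetic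

open scoped Pointwise

variable {G : Type*} [Group G]

/-- `A` is thickly syndetic: for every finite `K`, the set of `g` with `Kg ⊆ A` is syndetic. -/
private def ThickSyn (A : Set G) : Prop :=
  ∀ K : Finset G, IsSyndeticSet {g : G | ∀ κ ∈ K, κ * g ∈ A}

private lemma thickSyn_univ : ThickSyn (Set.univ : Set G) := by
  intro K
  exact ⟨{1}, fun g => ⟨1, Finset.mem_singleton_self 1, fun κ _ => Set.mem_univ _⟩⟩

private lemma thickSyn_inter {A B : Set G} (hA : ThickSyn A) (hB : ThickSyn B) :
    ThickSyn (A ∩ B) := by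
  classical
  intro K
  obtain ⟨E, hE⟩ := hB K
  obtain ⟨E', hE'⟩ := hA (K * E)
  refine ⟨E * E', fun g => ?_⟩
  obtain ⟨e', he'E, he'⟩ := hE' g
  obtain ⟨e, heE, he⟩ := hE (e' * g)
  refine ⟨e * e', Finset.mul_mem_mul heE he'E, fun κ hκ => ?_⟩
  constructor
  · have hmem := he' (κ * e) (Finset.mul_mem_mul hκ heE)
    have heq : κ * (e * e' * g) = κ * e * (e' * g) := by group
    rw [heq]
    exact hmem
  · have hmem := he κ hκ
    have heq : κ * (e * e' * g) = κ * (e * (e' * g)) := by group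
    rw [heq]
    exact hmem

private lemma thickSyn_iInter {k : ℕ} (P : Fin k → Set G) (h : ∀ i, ThickSyn (P i)) :
    ThickSyn (⋂ i, P i) := by
  classical
  have key : ∀ s : Finset (Fin k), ThickSyn (⋂ i ∈ s, P i) := by
    intro s
    induction s using Finset.induction_on with
    | empty => simpa using thickSyn_univ
    | insert _ _ ha ih =>
        rw [Finset.set_biInter_insert]
        exact thickSyn_inter (h _) ih
  have huniv := key Finset.univ
  have heq : (⋂ i ∈ (Finset.univ : Finset (Fin k)), P i) = ⋂ i, P i := by
    simp
  rwa [heq] at huniv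

private lemma IsSyndeticSet.nonempty {S : Set G} (h : IsSyndeticSet S) : S.Nonempty := by
  obtain ⟨F, hF⟩ := h
  obtain ⟨f, -, hf⟩ := hF 1
  exact ⟨f * 1, hf⟩

end AuxSyndetic

/-- Claim 4.4: for a commutative `G`, if `C_F(x)` is S-generic, non-minimal and has dense
almost periodic points, then for pairwise distinct minimal subsets `M₁, …, M_k ⊆ C_F(x)`,
any `δ > 0` and any open neighborhood `U` of a point of `C_F(x)`, the intersection
`N(U, B_δ(M₁)) ∩ ⋯ ∩ N(U, B_δ(M_k))` is nonempty. -/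
theorem inter_hitting_thickenings_nonempty
    {G : Type*} [Group G] [Infinite G] [DecidableEq G]
    {D : Type*} [Preorder D] [IsDirected D (· ≤ ·)] [Nonempty D]
    {X : Type*} [MetricSpace X] [CompactSpace X] [MulAction G X]
    (hcomm : ∀ a b : G, a * b = b * a)
    (hcont : ∀ g : G, Continuous fun y : X => g • y)
    (Fol : D → Finset G) (hFol : IsFolnerNet Fol) (x : X)
    (hS : ∃ z ∈ minCenter Fol x, minCenter Fol z = minCenter Fol x)
    (hnotmin : ¬ IsMinimalSubset G (minCenter Fol x))
    (hdense : minCenter Fol x ⊆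
      closure {z : X | z ∈ minCenter Fol x ∧ IsAlmostPeriodicPt G z})
    (k : ℕ) (hk : 2 ≤ k) (M : Fin k → Set X)
    (hMmin : ∀ i, IsMinimalSubset G (M i)) (hMsub : ∀ i, M i ⊆ minCenter Fol x)
    (hMdist : ∀ i j, i ≠ j → M i ≠ M j)
    (δ : ℝ) (hδ : 0 < δ) (z : X) (hz : z ∈ minCenter Fol x)
    (U : Set X) (hU : IsOpen U) (hzU : z ∈ U) :
    ∃ g : G, ∀ i, ∃ u ∈ U, g • u ∈ Metric.thickening δ (M i) := by
  classical
  obtain ⟨z₀, hz₀C, hz₀eq⟩ := hS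
  set N : Fin k → Set G :=
    fun i => {g : G | ∃ u ∈ U, g • u ∈ Metric.thickening δ (M i)} with hNdef
  have hTS : ∀ i, ThickSyn (N i) := by
    intro i K
    set Ω : Set X :=
      ⋂ κ ∈ K, (fun y : X => κ • y) ⁻¹' (Metric.thickening δ (M i)) with hΩdef
    have hΩopen : IsOpen Ω :=
      isOpen_biInter_finset fun κ _ => Metric.isOpen_thickening.preimage (hcont κ)
    obtain ⟨nᵢ, hnᵢ⟩ := (hMmin i).1
    have hMinv := (hMmin i).2.2.1
    have hnΩ : nᵢ ∈ Ω := by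
      rw [hΩdef]
      refine Set.mem_iInter₂.mpr fun κ _ => ?_
      exact Metric.self_subset_thickening hδ (M i) (hMinv κ nᵢ hnᵢ)
    have hnC : nᵢ ∈ minCenter Fol z₀ := by
      rw [hz₀eq]; exact hMsub i hnᵢ
    obtain ⟨r, hr⟩ : ∃ r : G, r • z₀ ∈ Ω :=
      nonempty_of_upperDensity_pos (hnC Ω hΩopen hnΩ)
    have hzC : z ∈ minCenter Fol z₀ := by rw [hz₀eq]; exact hz
    obtain ⟨t, ht⟩ : ∃ t : G, t • z₀ ∈ U :=
      nonempty_of_upperDensity_pos (hzC U hU hzU)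
    set γ : G := r * t⁻¹ with hγdef
    set V : Set X := U ∩ (fun y : X => γ • y) ⁻¹' Ω with hVdef
    have hVopen : IsOpen V := hU.inter (hΩopen.preimage (hcont γ))
    have htV : t • z₀ ∈ V := by
      refine ⟨ht, ?_⟩
      show γ • t • z₀ ∈ Ω
      rw [smul_smul, hγdef, inv_mul_cancel_right]
      exact hr
    have htC : t • z₀ ∈ minCenter Fol x :=
      smul_mem_minCenter hcont Fol hFol hz₀C t
    obtain ⟨w, hwV, hwap⟩ :
        ∃ w, w ∈ V ∧ IsAlmostPeriodicPt G w := by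
      have hcl := hdense htC
      rw [_root_.mem_closure_iff] at hcl
      obtain ⟨w, hwV, hw⟩ := hcl V hVopen htV
      exact ⟨w, hwV, hw.2⟩
    obtain ⟨F₀, hF₀⟩ := hwap V hVopen hwV
    refine ⟨F₀.image fun f => γ * f * γ⁻¹, fun g => ?_⟩
    obtain ⟨f, hfF, hfS⟩ := hF₀ (γ⁻¹ * g)
    refine ⟨γ * f * γ⁻¹, Finset.mem_image_of_mem _ hfF, fun κ hκ => ?_⟩
    refine ⟨w, hwV.1, ?_⟩
    have heq : κ * (γ * f * γ⁻¹ * g) = κ * (γ * (f * (γ⁻¹ * g))) := by group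
    rw [heq, mul_smul, mul_smul]
    have h1 : (f * (γ⁻¹ * g)) • w ∈ V := hfS
    have h2 : γ • ((f * (γ⁻¹ * g)) • w) ∈ Ω := h1.2
    rw [hΩdef] at h2
    exact Set.mem_iInter₂.mp h2 κ hκ
  have hTSint := thickSyn_iInter N hTS
  obtain ⟨g₀, hg₀⟩ := (hTSint ({1} : Finset G)).nonempty
  have hg₀' : g₀ ∈ ⋂ i, N i := by
    have h1 := hg₀ 1 (Finset.mem_singleton_self 1)
    simpa using h1
  exact ⟨g₀, fun i => Set.mem_iInter.mp hg₀' i⟩
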